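/- Let m ∈ ℝ, k ∈ ℤ, d ∈ ℕ with d ≥ 1, and suppose k/d < m < (k+1)/d. If a random variable Q takes values in {k/d, (k+1)/d} with mean m, then its variance equals −(k + k²)/d² + (1 + 2k)m/d − m², and this is the minimal variance among all random variables with mean m taking values in (1/d)·ℤ ∩ [0,1]. -/

import Mathlib

open MeasureTheory

/-- Minimal variance of a `(1/d)ℤ ∩ [0,1]`-valued random variable with mean
`m ∈ (k/d, (k+1)/d)`: its variance is at least
`−(k+k²)/d² + (1+2k)m/d − m²`, with equality iff it takes only the values
`k/d` and `(k+1)/d` almost surely. -/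
theorem min_variance_two_point
    {Ω : Type*} [MeasurableSpace Ω] (P : Measure Ω) [IsProbabilityMeasure P]
    (d : ℕ) (hd : 1 ≤ d) (k : ℤ) (m : ℝ)
    (Q : Ω → ℝ) (hQ : MemLp Q 2 P)
    (hvals : ∀ᵐ ω ∂P, ∃ j : ℤ, 0 ≤ j ∧ j ≤ (d : ℤ) ∧ Q ω = (j : ℝ) / d)
    (hmean : ∫ ω, Q ω ∂P = m)
    (h1 : (k : ℝ) / d < m) (h2 : m < ((k : ℝ) + 1) / d) :
    (-(((k : ℝ) + (k : ℝ) ^ 2) / (d : ℝ) ^ 2) + (1 + 2 * (k : ℝ)) * m / d - m ^ 2 ≤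
        (∫ ω, Q ω ^ 2 ∂P) - m ^ 2) ∧
      ((∫ ω, Q ω ^ 2 ∂P) - m ^ 2 =
          -(((k : ℝ) + (k : ℝ) ^ 2) / (d : ℝ) ^ 2) + (1 + 2 * (k : ℝ)) * m / d - m ^ 2 ↔
        ∀ᵐ ω ∂P, Q ω = (k : ℝ) / d ∨ Q ω = ((k : ℝ) + 1) / d) := by
  have hd0 : (0 : ℝ) < d := by exact_mod_cast hd
  set b : ℝ := (1 + 2 * (k : ℝ)) / d with hb
  set c : ℝ := ((k : ℝ) + (k : ℝ) ^ 2) / (d : ℝ) ^ 2 with hc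
  have hiQ : Integrable Q P := hQ.integrable (by norm_num)
  have hiQ2 : Integrable (fun ω => Q ω ^ 2) P := by
    have := hQ.integrable_sq
    simpa [sq] using this
  have hf_int : Integrable (fun ω => Q ω ^ 2 - b * Q ω + c) P :=
    (hiQ2.sub (hiQ.const_mul b)).add (integrable_const c)
  -- key algebraic identity
  have key : ∀ j : ℤ, ((j : ℝ) / d) ^ 2 - b * ((j : ℝ) / d) + c
      = (((j : ℝ) - k) * ((j : ℝ) - (k + 1))) / (d : ℝ) ^ 2 := by
    intro j
    rw [hb, hc]
    field_simp
    ring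
  have hf_nonneg : ∀ᵐ ω ∂P, 0 ≤ Q ω ^ 2 - b * Q ω + c := by
    filter_upwards [hvals] with ω hω
    obtain ⟨j, _, _, hj⟩ := hω
    rw [hj, key j]
    rcases le_or_gt j k with h | h
    · have h1' : (j : ℝ) ≤ k := by exact_mod_cast h
      have h2' : (j : ℝ) ≤ k + 1 := by linarith
      have : 0 ≤ ((j : ℝ) - k) * ((j : ℝ) - (k + 1)) :=
        by nlinarith
      positivity
    · have h1' : (k : ℝ) + 1 ≤ j := by exact_mod_cast h
      have : 0 ≤ ((j : ℝ) - k) * ((j : ℝ) - (k + 1)) :=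
        mul_nonneg (by linarith) (by linarith)
      positivity
  have hint : ∫ ω, (Q ω ^ 2 - b * Q ω + c) ∂P = (∫ ω, Q ω ^ 2 ∂P) - b * m + c := by
    have hsub : Integrable (fun ω => Q ω ^ 2 - b * Q ω) P := hiQ2.sub (hiQ.const_mul b)
    rw [integral_add hsub (integrable_const c),
      integral_sub hiQ2 (hiQ.const_mul b), integral_const_mul, hmean, integral_const]
    simp
  have hbm : b * m = (1 + 2 * (k : ℝ)) * m / d := by rw [hb]; ring
  constructor
  · have h0 : 0 ≤ ∫ ω, (Q ω ^ 2 - b * Q ω + c) ∂P := integral_nonneg_of_ae hf_nonneg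
    rw [hint] at h0
    rw [← hbm]
    linarith
  · have hzero : (∫ ω, (Q ω ^ 2 - b * Q ω + c) ∂P = 0) ↔
        (fun ω => Q ω ^ 2 - b * Q ω + c) =ᵐ[P] 0 :=
      integral_eq_zero_iff_of_nonneg_ae hf_nonneg hf_int
    constructor
    · intro heq
      have h0 : ∫ ω, (Q ω ^ 2 - b * Q ω + c) ∂P = 0 := by
        rw [hint, ← hbm] at *
        linarith
      have hae := hzero.mp h0
      filter_upwards [hvals, hae] with ω hω hfω
      obtain ⟨j, _, _, hj⟩ := hω
      simp only [Pi.zero_apply] at hfω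
      rw [hj, key j] at hfω
      have hprod : ((j : ℝ) - k) * ((j : ℝ) - (k + 1)) = 0 := by
        field_simp at hfω
        simpa using hfω
      rcases mul_eq_zero.mp hprod with h | h
      · left
        have : (j : ℝ) = k := by linarith
        rw [hj, this]
      · right
        have : (j : ℝ) = k + 1 := by linarith
        rw [hj, this]
    · intro hae
      have hae0 : (fun ω => Q ω ^ 2 - b * Q ω + c) =ᵐ[P] 0 := by
        filter_upwards [hae] with ω hω
        rcases hω with h | h
        · have := key k
          simp only [Pi.zero_apply]
          rw [h]
          push_cast at this ⊢
          rw [this]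
          ring
        · have := key (k + 1)
          simp only [Pi.zero_apply]
          have h' : Q ω = ((k + 1 : ℤ) : ℝ) / d := by push_cast; exact h
          rw [h', this]
          push_cast
          ring
      have h0 : ∫ ω, (Q ω ^ 2 - b * Q ω + c) ∂P = 0 := hzero.mpr hae0
      rw [hint] at h0
      rw [← hbm]
      linarith
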